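/- Let f : ℓ∞ → ℝ be bounded below and satisfy lim_{T→∞} f(x^T(u,v)) = f(u) for all u, v ∈ ℓ∞. Let g : ℓ∞ → ℓ∞ be both Asymptotically Insensitive (AI) and Asymptotically Non-Anticipatory (ANA), suppose there exists u₀ ∈ ℓ∞ with limsup_{t→∞} g_t(u₀) ≤ 0, and suppose that for all u, v ∈ ℓ∞ the family {g(x^T(u,v)) : T ∈ ℕ} is uniformly bounded in ℓ∞. Then, with infima and suprema in the extended reals, sup_{Λ∈(ℓ∞)*₊} inf_{x∈ℓ∞} [f(x) + Λ(g(x))] = sup_{λ∈ℓ¹₊} inf_{x∈ℓ∞} [f(x) + ∑_t λ_t g_t(x)]. -/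

import Mathlib

open scoped ENNReal
open Filter

/-- The sequence `x^T(u,v)` equal to `u_t` for `t ≤ T` and to `v_t` for `t > T`,
as an element of `ℓ∞`. -/
noncomputable def splice (u v : lp (fun _ : ℕ => ℝ) ∞) (T : ℕ) : lp (fun _ : ℕ => ℝ) ∞ :=
  ⟨fun t => if t ≤ T then u t else v t, by
    apply memℓp_infty
    refine ⟨max ‖u‖ ‖v‖, ?_⟩
    rintro r ⟨t, rfl⟩
    dsimp only
    split_ifs
    · exact le_max_of_le_left (lp.norm_apply_le_norm ENNReal.top_ne_zero u t)
    · exact le_max_of_le_right (lp.norm_apply_le_norm ENNReal.top_ne_zero v t)⟩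

/-- `g : ℓ∞ → ℓ∞` is Asymptotically Insensitive:
`lim_{t→∞} [g_t(x^T(u,v)) − g_t(v)] = 0` for all `u, v ∈ ℓ∞` and `T ∈ ℕ`. -/
def AI (g : lp (fun _ : ℕ => ℝ) ∞ → lp (fun _ : ℕ => ℝ) ∞) : Prop :=
  ∀ u v : lp (fun _ : ℕ => ℝ) ∞, ∀ T : ℕ,
    Tendsto (fun t : ℕ => g (splice u v T) t - g v t) atTop (nhds 0)

/-- `g : ℓ∞ → ℓ∞` is Asymptotically Non-Anticipatory:
`lim_{T→∞} [g_t(x^T(u,v)) − g_t(u)] = 0` for all `u, v ∈ ℓ∞` and `t ∈ ℕ`. -/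
def ANA (g : lp (fun _ : ℕ => ℝ) ∞ → lp (fun _ : ℕ => ℝ) ∞) : Prop :=
  ∀ u v : lp (fun _ : ℕ => ℝ) ∞, ∀ t : ℕ,
    Tendsto (fun T : ℕ => g (splice u v T) t - g u t) atTop (nhds 0)

/-! ### Auxiliary constructions -/

/-- The constant sequence `1` as an element of `ℓ∞`. -/
noncomputable def lone : lp (fun _ : ℕ => ℝ) ∞ :=
  ⟨fun _ => (1 : ℝ), memℓp_infty ⟨1, by rintro r ⟨t, rfl⟩; simp⟩⟩

/-- The `n`-th standard basis sequence as an element of `ℓ∞`. -/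
noncomputable def eVec (n : ℕ) : lp (fun _ : ℕ => ℝ) ∞ :=
  ⟨fun t => if t = n then (1 : ℝ) else 0, memℓp_infty ⟨1, by
    rintro r ⟨t, rfl⟩; dsimp only; split_ifs <;> simp⟩⟩

@[simp] lemma lone_apply (t : ℕ) : lone t = 1 := rfl
@[simp] lemma eVec_apply (n t : ℕ) : eVec n t = if t = n then 1 else 0 := rfl

lemma lam_summable (lam : lp (fun _ : ℕ => ℝ) 1) : Summable fun t => ‖lam t‖ := by
  have h := (lp.memℓp lam).summable (p := 1) (by norm_num)
  simpa using h

lemma pair_summable (lam : lp (fun _ : ℕ => ℝ) 1) (y : lp (fun _ : ℕ => ℝ) ∞) :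
    Summable fun t => lam t * y t := by
  refine Summable.of_norm_bounded ((lam_summable lam).mul_right ‖y‖) fun t => ?_
  rw [norm_mul]
  exact mul_le_mul_of_nonneg_left (lp.norm_apply_le_norm ENNReal.top_ne_zero y t) (norm_nonneg _)

/-- The pairing of `lam ∈ ℓ¹` with elements of `ℓ∞`, as a continuous linear functional. -/
noncomputable def pairing (lam : lp (fun _ : ℕ => ℝ) 1) : lp (fun _ : ℕ => ℝ) ∞ →L[ℝ] ℝ :=
  LinearMap.mkContinuous
    { toFun := fun y => ∑' t, lam t * y t
      map_add' := fun y z => by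
        simp only [lp.coeFn_add, Pi.add_apply, mul_add]
        exact Summable.tsum_add (pair_summable lam y) (pair_summable lam z)
      map_smul' := fun c y => by
        simp only [lp.coeFn_smul, Pi.smul_apply, smul_eq_mul, RingHom.id_apply]
        rw [← tsum_mul_left]
        congr 1; ext t; ring }
    (∑' t, ‖lam t‖) (fun y => by
      have h2 : ∀ t, ‖lam t * y t‖ ≤ ‖lam t‖ * ‖y‖ := fun t => by
        rw [norm_mul]
        exact mul_le_mul_of_nonneg_left (lp.norm_apply_le_norm ENNReal.top_ne_zero y t)
          (norm_nonneg _)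
      have h1 : Summable fun t => ‖lam t‖ * ‖y‖ := (lam_summable lam).mul_right _
      have h3 : Summable fun t => ‖lam t * y t‖ :=
        Summable.of_nonneg_of_le (fun t => norm_nonneg _) h2 h1
      calc ‖∑' t, lam t * y t‖ ≤ ∑' t, ‖lam t * y t‖ := norm_tsum_le_tsum_norm h3
        _ ≤ ∑' t, ‖lam t‖ * ‖y‖ := Summable.tsum_le_tsum h2 h3 h1
        _ = (∑' t, ‖lam t‖) * ‖y‖ := tsum_mul_right)

@[simp] lemma pairing_apply (lam : lp (fun _ : ℕ => ℝ) 1) (y : lp (fun _ : ℕ => ℝ) ∞) :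
    pairing lam y = ∑' t, lam t * y t := rfl

lemma ereal_le_of_forall {a : EReal} {c : ℝ}
    (h : ∀ δ : ℝ, 0 < δ → a ≤ ((c + δ : ℝ) : EReal)) : a ≤ (c : EReal) := by
  have hlim : Tendsto (fun n : ℕ => ((c + 1 / (n + 1) : ℝ) : EReal)) atTop (nhds (c : EReal)) := by
    rw [EReal.tendsto_coe]
    simpa using tendsto_const_nhds.add (tendsto_one_div_add_atTop_nhds_zero_nat (𝕜 := ℝ))
  exact ge_of_tendsto' hlim fun n => h (1 / (n + 1)) (by positivity)

set_option maxHeartbeats 2000000 in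
/-- Under the stated asymptotic conditions on `f : ℓ∞ → ℝ` (bounded
below) and `g : ℓ∞ → ℓ∞` (AI and ANA, with a point `u₀` whose constraint values have
nonpositive limsup and uniform boundedness along splices), the dual value over the full
continuous dual `(ℓ∞)*₊` equals the dual value over `ℓ¹₊`:
`sup_{Λ∈(ℓ∞)*₊} inf_x [f(x) + Λ(g(x))] = sup_{λ∈ℓ¹₊} inf_x [f(x) + ∑_t λ_t g_t(x)]`. -/
theorem stmt7 (f : lp (fun _ : ℕ => ℝ) ∞ → ℝ)
    (M : ℝ) (hfbdd : ∀ x, M ≤ f x)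
    (hf : ∀ u v : lp (fun _ : ℕ => ℝ) ∞,
      Tendsto (fun T : ℕ => f (splice u v T)) atTop (nhds (f u)))
    (g : lp (fun _ : ℕ => ℝ) ∞ → lp (fun _ : ℕ => ℝ) ∞)
    (hAI : AI g) (hANA : ANA g)
    (u₀ : lp (fun _ : ℕ => ℝ) ∞) (hu₀ : Filter.limsup (fun t : ℕ => g u₀ t) atTop ≤ 0)
    (hbdd : ∀ u v : lp (fun _ : ℕ => ℝ) ∞, ∃ C : ℝ, ∀ T : ℕ, ‖g (splice u v T)‖ ≤ C) :
    (⨆ (Λ : lp (fun _ : ℕ => ℝ) ∞ →L[ℝ] ℝ)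
        (_ : ∀ y : lp (fun _ : ℕ => ℝ) ∞, (∀ t, 0 ≤ y t) → 0 ≤ Λ y),
        ⨅ x : lp (fun _ : ℕ => ℝ) ∞, ((f x + Λ (g x) : ℝ) : EReal))
      = ⨆ (lam : lp (fun _ : ℕ => ℝ) 1) (_ : ∀ t, 0 ≤ lam t),
        ⨅ x : lp (fun _ : ℕ => ℝ) ∞, ((f x + ∑' t, lam t * g x t : ℝ) : EReal) := by
  apply le_antisymm
  · -- the hard direction: every positive `Λ` is dominated by its `ℓ¹`-part
    refine iSup₂_le fun Λ hΛ => ?_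
    classical
    -- the `ℓ¹` part of `Λ`
    set lamf : ℕ → ℝ := fun t => Λ (eVec t) with hlamf_def
    have hpos : ∀ t, 0 ≤ lamf t := fun t => hΛ (eVec t) (fun s => by
      simp only [eVec_apply]; split_ifs <;> norm_num)
    have hΛone : 0 ≤ Λ lone := hΛ lone (fun t => by norm_num)
    have hhead : ∀ (z : lp (fun _ : ℕ => ℝ) ∞) (N : ℕ),
        Λ (∑ t ∈ Finset.range N, z t • eVec t) = ∑ t ∈ Finset.range N, lamf t * z t := by
      intro z N
      rw [map_sum]
      exact Finset.sum_congr rfl fun t _ => by rw [map_smul, smul_eq_mul, mul_comm]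
    have hone : ∀ n : ℕ, ∑ t ∈ Finset.range n, lamf t ≤ Λ lone := by
      intro n
      have h0 : 0 ≤ Λ (lone - ∑ t ∈ Finset.range n, (1 : ℝ) • eVec t) := by
        refine hΛ _ fun s => ?_
        have hc : (lone - ∑ t ∈ Finset.range n, (1 : ℝ) • eVec t) s
            = 1 - ∑ t ∈ Finset.range n, (if s = t then (1 : ℝ) else 0) := by
          rw [lp.coeFn_sub, Pi.sub_apply, lp.coeFn_sum, Finset.sum_apply]
          simp [lp.coeFn_smul]
        rw [hc, Finset.sum_ite_eq]
        split_ifs <;> norm_num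
      have h1 : Λ (∑ t ∈ Finset.range n, (1 : ℝ) • eVec t)
          = ∑ t ∈ Finset.range n, lamf t := by
        rw [map_sum]
        exact Finset.sum_congr rfl fun t _ => by rw [map_smul, smul_eq_mul, one_mul]
      rw [map_sub, h1] at h0
      linarith
    have hsummable : Summable lamf := summable_of_sum_range_le hpos hone
    set lam : lp (fun _ : ℕ => ℝ) 1 :=
      ⟨lamf, memℓp_gen (by
        simpa using hsummable.congr fun t => (Real.norm_of_nonneg (hpos t)).symm)⟩ with hlam_def
    have hlam_apply : ∀ t, lam t = lamf t := fun t => rfl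
    refine le_iSup₂_of_le lam (fun t => hpos t) (le_iInf fun x => ?_)
    -- it suffices to prove the bound with an extra `δ`
    refine ereal_le_of_forall fun δ hδ => ?_
    obtain ⟨C, hC⟩ := hbdd x u₀
    have hC0 : (0 : ℝ) ≤ C := le_trans (norm_nonneg _) (hC 0)
    set K : ℝ := C + Λ lone + 3 with hK_def
    have hK : 0 < K := by positivity
    set ε : ℝ := δ / K with hε_def
    have hε : 0 < ε := by positivity
    -- Step 1: choose the splicing time `T`
    have hg_tend : Tendsto (fun T => ∑' t, lamf t * g (splice x u₀ T) t) atTop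
        (nhds (∑' t, lamf t * g x t)) := by
      refine tendsto_tsum_of_dominated_convergence (bound := fun t => lamf t * C)
        (hsummable.mul_right C) (fun t => ?_) ?_
      · have h1 : Tendsto (fun T => g (splice x u₀ T) t) atTop (nhds (g x t)) :=
          tendsto_sub_nhds_zero_iff.mp (hANA x u₀ t)
        exact h1.const_mul (lamf t)
      · filter_upwards with T t
        rw [norm_mul, Real.norm_of_nonneg (hpos t)]
        refine mul_le_mul_of_nonneg_left ?_ (hpos t)
        exact le_trans (lp.norm_apply_le_norm ENNReal.top_ne_zero _ t) (hC T)
    have h1 := (hf x u₀).eventually_lt_const (show f x < f x + ε by linarith)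
    have h2 := hg_tend.eventually_lt_const
      (show (∑' t, lamf t * g x t) < (∑' t, lamf t * g x t) + ε by linarith)
    obtain ⟨T, hT1, hT2⟩ := (h1.and h2).exists
    set z : lp (fun _ : ℕ => ℝ) ∞ := g (splice x u₀ T) with hz_def
    have hzC : ∀ s, z s ≤ C := fun s =>
      le_trans (le_abs_self _) (le_trans (lp.norm_apply_le_norm ENNReal.top_ne_zero z s) (hC T))
    -- Step 2: choose the truncation index `N`
    have hz_ev : ∀ᶠ t in atTop, z t ≤ ε := by
      have hb : IsBoundedUnder (· ≤ ·) atTop (fun t : ℕ => g u₀ t) :=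
        isBoundedUnder_of ⟨‖g u₀‖, fun t =>
          le_trans (le_abs_self _) (lp.norm_apply_le_norm ENNReal.top_ne_zero (g u₀) t)⟩
      have h3 : ∀ᶠ t in atTop, g u₀ t < ε / 2 :=
        eventually_lt_of_limsup_lt (lt_of_le_of_lt hu₀ (by linarith)) hb
      have h4 : ∀ᶠ t in atTop, ‖g (splice x u₀ T) t - g u₀ t‖ < ε / 2 :=
        NormedAddCommGroup.tendsto_nhds_zero.mp (hAI x u₀ T) (ε / 2) (by linarith)
      filter_upwards [h3, h4] with t h3t h4t
      have := (abs_lt.mp h4t).2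
      simp only [hz_def]
      linarith
    have htail : Tendsto (fun N => ∑' t, lamf (t + N)) atTop (nhds 0) := by
      have h5 : Tendsto (fun N => (∑' t, lamf t) - ∑ t ∈ Finset.range N, lamf t) atTop
          (nhds ((∑' t, lamf t) - ∑' t, lamf t)) :=
        tendsto_const_nhds.sub hsummable.hasSum.tendsto_sum_nat
      rw [sub_self] at h5
      refine h5.congr fun N => ?_
      have h6 := Summable.sum_add_tsum_nat_add N hsummable
      linarith
    have hNev : ∀ᶠ N in atTop, C * (∑' t, lamf (t + N)) < ε := by
      have := (htail.const_mul C).eventually_lt_const (show C * 0 < ε by simpa using hε)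
      simpa using this
    obtain ⟨N0, hN0⟩ := eventually_atTop.mp hz_ev
    obtain ⟨N1, hN1⟩ := eventually_atTop.mp hNev
    set N : ℕ := max N0 N1 with hN_def
    have hzN : ∀ s, N ≤ s → z s ≤ ε := fun s hs => hN0 s (le_trans (le_max_left _ _) hs)
    have hCtail : C * (∑' t, lamf (t + N)) < ε := hN1 N (le_max_right _ _)
    -- Claim A : Λ z ≤ head sum + ε * Λ lone
    have hA : Λ z ≤ ∑ t ∈ Finset.range N, lamf t * z t + ε * Λ lone := by
      have hw : 0 ≤ Λ ((∑ t ∈ Finset.range N, z t • eVec t) + ε • lone - z) := by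
        refine hΛ _ fun s => ?_
        have hc : ((∑ t ∈ Finset.range N, z t • eVec t) + ε • lone - z) s
            = (∑ t ∈ Finset.range N, (if s = t then z t else 0)) + ε - z s := by
          rw [lp.coeFn_sub, Pi.sub_apply, lp.coeFn_add, Pi.add_apply,
            lp.coeFn_sum, Finset.sum_apply]
          simp [lp.coeFn_smul, mul_ite]
        rw [hc, Finset.sum_ite_eq]
        split_ifs with h
        · simp only [Finset.mem_range] at h
          linarith
        · simp only [Finset.mem_range, not_lt] at h
          have := hzN s h
          linarith
      rw [map_sub, map_add, hhead, map_smul, smul_eq_mul] at hw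
      linarith
    -- Claim B : head sum ≤ full sum + ε
    have hzsum : Summable fun t => lamf t * z t := pair_summable lam z
    have hB : ∑ t ∈ Finset.range N, lamf t * z t ≤ (∑' t, lamf t * z t) + ε := by
      have hadd := Summable.sum_add_tsum_nat_add N hzsum
      have hls : Summable fun t => lamf (t + N) * C :=
        ((summable_nat_add_iff N).mpr hsummable).mul_right C
      have hle : ∀ t, ‖lamf (t + N) * z (t + N)‖ ≤ lamf (t + N) * C := fun t => by
        rw [norm_mul, Real.norm_of_nonneg (hpos _)]
        refine mul_le_mul_of_nonneg_left ?_ (hpos _)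
        exact le_trans (lp.norm_apply_le_norm ENNReal.top_ne_zero z _) (hC T)
      have hns : Summable fun t => ‖lamf (t + N) * z (t + N)‖ :=
        Summable.of_nonneg_of_le (fun t => norm_nonneg _) hle hls
      have habs : ‖∑' t, lamf (t + N) * z (t + N)‖ ≤ C * ∑' t, lamf (t + N) := by
        calc ‖∑' t, lamf (t + N) * z (t + N)‖ ≤ ∑' t, ‖lamf (t + N) * z (t + N)‖ :=
              norm_tsum_le_tsum_norm hns
          _ ≤ ∑' t, lamf (t + N) * C := Summable.tsum_le_tsum hle hns hls
          _ = (∑' t, lamf (t + N)) * C := tsum_mul_right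
          _ = C * ∑' t, lamf (t + N) := mul_comm _ _
      rw [Real.norm_eq_abs] at habs
      have := (abs_le.mp habs).1
      linarith
    -- combine
    have hεK : ε * K = δ := div_mul_cancel₀ δ (ne_of_gt hK)
    have hεC : 0 ≤ ε * C := by positivity
    have final : f (splice x u₀ T) + Λ (g (splice x u₀ T)) ≤
        (f x + ∑' t, lamf t * g x t) + δ := by
      have hεK' : ε * C + ε * Λ lone + 3 * ε = δ := by
        rw [← hεK, hK_def]; ring
      have hΛz : Λ (g (splice x u₀ T)) = Λ z := rfl
      rw [hΛz]
      have hzx : (∑' t, lamf t * z t) < (∑' t, lamf t * g x t) + ε := hT2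
      linarith
    refine iInf_le_of_le (splice x u₀ T) ?_
    exact_mod_cast EReal.coe_le_coe_iff.mpr final
  · -- the easy direction: every `lam ∈ ℓ¹₊` gives a positive functional with the same value
    refine iSup₂_le fun lam hlam => ?_
    refine le_iSup₂_of_le (pairing lam)
      (fun y hy => tsum_nonneg fun t => mul_nonneg (hlam t) (hy t)) ?_
    exact le_of_eq (iInf_congr fun x => by rw [pairing_apply])
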